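/- Let U ⊂ ℝ^N be open with closure homeomorphic to the closed unit disk, and let φ₀, φ₁ be continuous maps defined on a neighbourhood of closure(U) which are homeomorphisms onto their images. If there exists t > 0 with |φ₀(x) − φ₁(x)| < t for all x ∈ closure(U), then (φ₀(U))_t ⊆ φ₁(U), where (V)_t := {y ∈ V : dist(y, ∂V) > t}. -/

import Mathlib

noncomputable section

abbrev Euc (d : ℕ) := EuclideanSpace ℝ (Fin d)

/-- `shrinkSet V t = V_t := {y ∈ V : dist(y, ∂V) > t}`. -/
def shrinkSet {N : ℕ} (V : Set (Euc N)) (t : ℝ) : Set (Euc N) :=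
  {y ∈ V | t < Metric.infDist y (frontier V)}

open Metric Set MeasureTheory Polynomial
open scoped RealInnerProductSpace


/-- A linear endomorphism of a finite-dimensional space with nonzero determinant
is bijective. -/
lemma det_ne_zero_bijective {E : Type*} [NormedAddCommGroup E] [NormedSpace ℝ E]
    [FiniteDimensional ℝ E] (f : E →ₗ[ℝ] E) (hf : LinearMap.det f ≠ 0) :
    Function.Bijective f := by
  classical
  let b := Module.finBasis ℝ E
  have hm : (LinearMap.toMatrix b b f).det ≠ 0 := by
    rwa [LinearMap.det_toMatrix]
  have hu : IsUnit (LinearMap.toMatrix b b f) :=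
    (Matrix.isUnit_iff_isUnit_det _).2 (isUnit_iff_ne_zero.2 hm)
  have h2 : IsUnit f := by
    have h3 := hu.map (LinearMap.toMatrixAlgEquiv b).symm
    have h4 : (LinearMap.toMatrixAlgEquiv b).symm (LinearMap.toMatrix b b f) = f := by
      have : LinearMap.toMatrixAlgEquiv b f = LinearMap.toMatrix b b f := rfl
      rw [← this, AlgEquiv.symm_apply_apply]
    rwa [h4] at h3
  exact (Module.End.isUnit_iff f).mp h2

/-- A segment from a point of `V` to a point outside `V` meets the frontier of `V`
no farther from the start than the endpoint. -/
lemma segment_meets_frontier {E : Type*} [NormedAddCommGroup E] [NormedSpace ℝ E]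
    {V : Set E} {y z : E} (hy : y ∈ V) (hz : z ∉ V) :
    ∃ p ∈ frontier V, dist y p ≤ dist y z := by
  by_cases hyf : y ∈ frontier V
  · exact ⟨y, hyf, by simp [dist_nonneg]⟩
  by_cases hzf : z ∈ frontier V
  · exact ⟨z, hzf, le_refl _⟩
  have hyi : y ∈ interior V := by
    have hyc : y ∈ closure V := subset_closure hy
    rw [frontier, Set.mem_diff] at hyf
    tauto
  have hzc : z ∉ closure V := by
    intro hc
    apply hzf
    rw [frontier, Set.mem_diff]
    exact ⟨hc, fun hi => hz (interior_subset hi)⟩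
  have hseg : (segment ℝ y z ∩ frontier V).Nonempty := by
    by_contra hemp
    rw [Set.not_nonempty_iff_eq_empty] at hemp
    have hsub : segment ℝ y z ⊆ interior V ∪ (closure V)ᶜ := by
      intro p hp
      have hpf : p ∉ frontier V := by
        intro hpf
        exact absurd (Set.mem_inter hp hpf) (by simp [hemp])
      by_cases hpc : p ∈ closure V
      · left
        rw [frontier, Set.mem_diff] at hpf
        tauto
      · right; exact hpc
    rcases (convex_segment y z).isPreconnected _ _ isOpen_interior
        isClosed_closure.isOpen_compl hsub
        ⟨y, left_mem_segment ℝ y z, hyi⟩ ⟨z, right_mem_segment ℝ y z, hzc⟩ with ⟨p, _, hpi, hpc⟩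
    exact hpc (subset_closure (interior_subset hpi))
  obtain ⟨p, hpseg, hpf⟩ := hseg
  refine ⟨p, hpf, ?_⟩
  obtain ⟨a, b, ha, hb, hab, rfl⟩ := hpseg
  have key : y - (a • y + b • z) = b • (y - z) := by
    have h1 : (1 : ℝ) • y = y := one_smul _ _
    rw [← hab] at h1
    calc y - (a • y + b • z) = (a + b) • y - (a • y + b • z) := by rw [hab, one_smul]
    _ = b • (y - z) := by
        rw [add_smul, smul_sub]; abel
  rw [dist_eq_norm, dist_eq_norm, key, norm_smul, Real.norm_eq_abs, abs_of_nonneg hb]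
  nlinarith [norm_nonneg (y - z)]

/-- Uniform approximation of a continuous map on a compact subset of Euclidean space by a
smooth map, via Stone–Weierstrass. -/
lemma exists_smooth_approx {N : ℕ} (K : Set (Euc N)) (hK : IsCompact K)
    (f : Euc N → Euc N) (hf : ContinuousOn f K) {ε : ℝ} (hε : 0 < ε) :
    ∃ q : Euc N → Euc N, ContDiff ℝ ⊤ q ∧ ∀ z ∈ K, ‖q z - f z‖ < ε := by
  classical
  haveI : CompactSpace ↥K := isCompact_iff_compactSpace.mp hK
  -- coordinate functions are smooth
  have hcoord : ∀ i : Fin N, ContDiff ℝ ⊤ (fun z : Euc N => z i) :=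
    fun i => contDiff_euclidean.mp contDiff_id i
  -- the subalgebra of restrictions of smooth functions
  let A : Subalgebra ℝ C(↥K, ℝ) :=
  { carrier := {g | ∃ F : Euc N → ℝ, ContDiff ℝ ⊤ F ∧ ∀ x : ↥K, g x = F (x : Euc N)}
    mul_mem' := by
      rintro g₁ g₂ ⟨F₁, hF₁, hg₁⟩ ⟨F₂, hF₂, hg₂⟩
      exact ⟨F₁ * F₂, hF₁.mul hF₂, fun x => by
        simp [ContinuousMap.mul_apply, hg₁ x, hg₂ x]⟩
    add_mem' := by
      rintro g₁ g₂ ⟨F₁, hF₁, hg₁⟩ ⟨F₂, hF₂, hg₂⟩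
      exact ⟨F₁ + F₂, hF₁.add hF₂, fun x => by
        simp [ContinuousMap.add_apply, hg₁ x, hg₂ x]⟩
    algebraMap_mem' := fun r =>
      ⟨fun _ => r, contDiff_const, fun x => rfl⟩ }
  have hsep : A.SeparatesPoints := by
    rintro x y hxy
    have hne : (x : Euc N) ≠ (y : Euc N) := fun h => hxy (Subtype.ext h)
    have : ∃ i, (x : Euc N) i ≠ (y : Euc N) i := by
      by_contra hc
      push_neg at hc
      exact hne (by ext i; exact hc i)
    obtain ⟨i, hi⟩ := this
    have hcont : Continuous (fun p : ↥K => (p : Euc N) i) :=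
      (hcoord i).continuous.comp continuous_subtype_val
    have hmemA : (⟨fun p : ↥K => (p : Euc N) i, hcont⟩ : C(↥K, ℝ)) ∈ A :=
      ⟨fun z : Euc N => z i, hcoord i, fun _ => rfl⟩
    exact ⟨_, ⟨_, hmemA, rfl⟩, hi⟩
  -- approximate each coordinate of f
  set ε' : ℝ := ε / (N + 1) with hε'def
  have hε' : 0 < ε' := by positivity
  have hcoordf : ∀ i : Fin N, Continuous (fun x : ↥K => f (x : Euc N) i) := by
    intro i
    have h1 : Continuous (K.restrict f) := continuousOn_iff_continuous_restrict.mp hf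
    exact ((hcoord i).continuous.comp h1)
  have happrox : ∀ i : Fin N, ∃ F : Euc N → ℝ, ContDiff ℝ ⊤ F ∧
      ∀ x : ↥K, ‖F (x : Euc N) - f (x : Euc N) i‖ < ε' := by
    intro i
    obtain ⟨g, hg⟩ := ContinuousMap.exists_mem_subalgebra_near_continuous_of_separatesPoints
      A hsep (fun x : ↥K => f (x : Euc N) i) (hcoordf i) ε' hε'
    obtain ⟨F, hF, hgF⟩ := g.2
    refine ⟨F, hF, fun x => ?_⟩
    have := hg x
    rwa [hgF x] at this
  choose F hFsmooth hFapprox using happrox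
  set q : Euc N → Euc N := fun z => (WithLp.equiv 2 (Fin N → ℝ)).symm (fun i => F i z) with hqdef
  have hqi : ∀ z i, q z i = F i z := by
    intro z i
    simp [hqdef]
  refine ⟨q, ?_, ?_⟩
  · refine contDiff_euclidean.mpr fun i => ?_
    have : (fun z => q z i) = fun z => F i z := funext fun z => hqi z i
    rw [this]
    exact hFsmooth i
  · intro z hz
    have hcoordbound : ∀ i : Fin N, ‖q z i - f z i‖ < ε' := by
      intro i
      rw [hqi]
      exact hFapprox i ⟨z, hz⟩
    have hnorm : ‖q z - f z‖ ≤ Real.sqrt (N * ε' ^ 2) := by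
      rw [EuclideanSpace.norm_eq]
      apply Real.sqrt_le_sqrt
      have hterm : ∀ i : Fin N, ‖(q z - f z) i‖ ^ 2 ≤ ε' ^ 2 := by
        intro i
        have h1 : (q z - f z) i = q z i - f z i := rfl
        rw [h1]
        have h2 := (hcoordbound i).le
        have h3 : (0:ℝ) ≤ ‖q z i - f z i‖ := norm_nonneg _
        nlinarith
      calc ∑ i, ‖(q z - f z) i‖ ^ 2 ≤ ∑ _i : Fin N, ε' ^ 2 :=
            Finset.sum_le_sum fun i _ => hterm i
        _ = N * ε' ^ 2 := by simp [Finset.sum_const, mul_comm]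
    have hlt : Real.sqrt (N * ε' ^ 2) < ε := by
      have h1 : Real.sqrt (N * ε' ^ 2) = Real.sqrt N * ε' := by
        rw [Real.sqrt_mul (by positivity), Real.sqrt_sq hε'.le]
      rw [h1]
      have h2 : Real.sqrt N < N + 1 := by
        refine (Real.sqrt_lt' (by positivity)).mpr ?_
        nlinarith [Nat.cast_nonneg (α := ℝ) N]
      calc Real.sqrt N * ε' < (N + 1) * ε' := mul_lt_mul_of_pos_right h2 hε'
        _ = ε := by rw [hε'def]; field_simp
    exact lt_of_le_of_lt hnorm hlt
lemma det_ne_zero_bijective' {E : Type*} [NormedAddCommGroup E] [NormedSpace ℝ E]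
    [FiniteDimensional ℝ E] (f : E →ₗ[ℝ] E) (hf : LinearMap.det f ≠ 0) :
    Function.Bijective f := by
  classical
  let b := Module.finBasis ℝ E
  have hm : (LinearMap.toMatrix b b f).det ≠ 0 := by rwa [LinearMap.det_toMatrix]
  have hu : IsUnit (LinearMap.toMatrix b b f) :=
    (Matrix.isUnit_iff_isUnit_det _).2 (isUnit_iff_ne_zero.2 hm)
  have h2 : IsUnit f := by
    have h3 := hu.map (LinearMap.toMatrixAlgEquiv b).symm
    have h4 : (LinearMap.toMatrixAlgEquiv b).symm (LinearMap.toMatrix b b f) = f := by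
      have h5 : LinearMap.toMatrixAlgEquiv b f = LinearMap.toMatrix b b f := rfl
      rw [← h5, AlgEquiv.symm_apply_apply]
    rwa [h4] at h3
  exact (Module.End.isUnit_iff f).mp h2

/-- Construction of a smooth retraction-like map from a smooth fixed-point-free map. -/
lemma exists_retraction {N : ℕ} {ρ : ℝ} (hρpos : 0 < ρ)
    {Ω : Set (Euc N)} (hΩ : IsOpen Ω)
    {q : Euc N → Euc N} (hq : ContDiff ℝ ⊤ q)
    (hqn : ∀ z ∈ Ω, ‖q z‖ < ρ) (hqz : ∀ z ∈ Ω, q z ≠ z) :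
    ∃ r : Euc N → Euc N, ContDiffOn ℝ ⊤ r Ω ∧ (∀ z ∈ Ω, ‖r z‖ = ρ) ∧
      (∀ z ∈ Ω, ‖z‖ = ρ → r z = z) ∧ ∀ z ∈ Ω, (fderiv ℝ r z).det = 0 := by
  classical
  set nv : Euc N → ℝ := fun z => ‖z - q z‖ ^ 2 with hnvdef
  set af : Euc N → ℝ := fun z => ⟪q z, z - q z⟫ with hafdef
  set df : Euc N → ℝ := fun z => af z ^ 2 + (ρ ^ 2 - ‖q z‖ ^ 2) * nv z with hdfdef
  set sf : Euc N → ℝ := fun z => (Real.sqrt (df z) - af z) / nv z with hsfdef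
  set r : Euc N → Euc N := fun z => q z + sf z • (z - q z) with hrdef
  have hnv : ∀ z ∈ Ω, 0 < nv z := by
    intro z hz
    have hne : z - q z ≠ 0 := sub_ne_zero_of_ne (fun h => hqz z hz h.symm)
    exact pow_pos (norm_pos_iff.mpr hne) 2
  have hbf : ∀ z ∈ Ω, 0 < ρ ^ 2 - ‖q z‖ ^ 2 := by
    intro z hz
    have h1 := hqn z hz
    have h2 := norm_nonneg (q z)
    nlinarith
  have hdf : ∀ z ∈ Ω, 0 < df z := by
    intro z hz
    have h1 := hnv z hz
    have h2 := hbf z hz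
    have h3 := sq_nonneg (af z)
    simp only [hdfdef]
    nlinarith
  -- smoothness
  have hvs : ContDiff ℝ ⊤ (fun z : Euc N => z - q z) := contDiff_id.sub hq
  have hnvs : ContDiff ℝ ⊤ nv := hvs.norm_sq (𝕜 := ℝ)
  have hafs : ContDiff ℝ ⊤ af := hq.inner ℝ hvs
  have hdfs : ContDiff ℝ ⊤ df := by
    exact (hafs.pow 2).add ((contDiff_const.sub (hq.norm_sq (𝕜 := ℝ))).mul hnvs)
  have hsqrts : ContDiffOn ℝ ⊤ (fun z => Real.sqrt (df z)) Ω := by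
    intro z hz
    exact ((hdfs.contDiffAt).sqrt (ne_of_gt (hdf z hz))).contDiffWithinAt
  have hsfs : ContDiffOn ℝ ⊤ sf Ω :=
    (hsqrts.sub hafs.contDiffOn).div hnvs.contDiffOn (fun z hz => ne_of_gt (hnv z hz))
  have hrs : ContDiffOn ℝ ⊤ r Ω := hq.contDiffOn.add (hsfs.smul hvs.contDiffOn)
  -- the quadratic identity
  have hquad : ∀ z ∈ Ω, ⟪r z, r z⟫ = ρ ^ 2 := by
    intro z hz
    have h1 : r z = q z + sf z • (z - q z) := rfl
    rw [h1, real_inner_add_add_self, real_inner_smul_right, real_inner_smul_left,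
      real_inner_smul_right, real_inner_self_eq_norm_sq, real_inner_self_eq_norm_sq]
    have hS : Real.sqrt (df z) ^ 2 = df z := Real.sq_sqrt (hdf z hz).le
    have hsval : sf z = (Real.sqrt (df z) - af z) / nv z := rfl
    have haval : ⟪q z, z - q z⟫ = af z := rfl
    have hnval : ‖z - q z‖ ^ 2 = nv z := rfl
    have hdval : df z = af z ^ 2 + (ρ ^ 2 - ‖q z‖ ^ 2) * nv z := rfl
    rw [haval, hnval, hsval]
    have hnvne : nv z ≠ 0 := ne_of_gt (hnv z hz)
    field_simp
    nlinarith [hS, hdval, hnv z hz]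
  have hrnorm : ∀ z ∈ Ω, ‖r z‖ = ρ := by
    intro z hz
    have h := hquad z hz
    rw [real_inner_self_eq_norm_sq] at h
    have h2 : (‖r z‖ - ρ) * (‖r z‖ + ρ) = 0 := by nlinarith
    rcases mul_eq_zero.mp h2 with h3 | h3
    · linarith
    · have := norm_nonneg (r z); linarith
  -- the sphere is fixed
  have hsphere : ∀ z ∈ Ω, ‖z‖ = ρ → r z = z := by
    intro z hz hzρ
    have hinner : nv z + af z = ⟪z, z - q z⟫ := by
      have h1 : nv z = ⟪z - q z, z - q z⟫ := (real_inner_self_eq_norm_sq _).symm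
      have h2 : (z - q z) + q z = z := sub_add_cancel z (q z)
      calc nv z + af z = ⟪z - q z, z - q z⟫ + ⟪q z, z - q z⟫ := by rw [h1]
        _ = ⟪(z - q z) + q z, z - q z⟫ := (inner_add_left _ _ _).symm
        _ = ⟪z, z - q z⟫ := by rw [h2]
    have hpos : 0 < nv z + af z := by
      rw [hinner]
      have hCS : ⟪z, q z⟫ ≤ ‖z‖ * ‖q z‖ := real_inner_le_norm z (q z)
      have h3 : ⟪z, z - q z⟫ = ⟪z, z⟫ - ⟪z, q z⟫ := inner_sub_right _ _ _
      rw [h3, real_inner_self_eq_norm_sq, hzρ]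
      rw [hzρ] at hCS
      nlinarith [hqn z hz, norm_nonneg (q z), hρpos]
    have hquadz : ρ ^ 2 = ‖q z‖ ^ 2 + 2 * af z + nv z := by
      have h1 : ⟪z, z⟫ = ρ ^ 2 := by rw [real_inner_self_eq_norm_sq, hzρ]
      have h2 : q z + (z - q z) = z := add_sub_cancel (q z) z
      calc ρ ^ 2 = ⟪z, z⟫ := h1.symm
        _ = ⟪q z + (z - q z), q z + (z - q z)⟫ := by rw [h2]
        _ = ‖q z‖ ^ 2 + 2 * af z + nv z := by
            rw [real_inner_add_add_self, real_inner_self_eq_norm_sq,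
              real_inner_self_eq_norm_sq]
    have hdsq : df z = (nv z + af z) ^ 2 := by
      have hdval : df z = af z ^ 2 + (ρ ^ 2 - ‖q z‖ ^ 2) * nv z := rfl
      rw [hdval]
      nlinarith [hquadz]
    have hsqrt : Real.sqrt (df z) = nv z + af z := by
      rw [hdsq, Real.sqrt_sq hpos.le]
    have hsf1 : sf z = 1 := by
      have hsval : sf z = (Real.sqrt (df z) - af z) / nv z := rfl
      rw [hsval, hsqrt]
      have hnvne : nv z ≠ 0 := ne_of_gt (hnv z hz)
      field_simp
      ring
    show q z + sf z • (z - q z) = z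
    rw [hsf1, one_smul, add_sub_cancel]
  -- vanishing determinant of the differential
  have hdet0 : ∀ z ∈ Ω, (fderiv ℝ r z).det = 0 := by
    intro z hz
    have hdiff : DifferentiableOn ℝ r Ω := hrs.differentiableOn (by simp)
    have hdAt : DifferentiableAt ℝ r z := hdiff.differentiableAt (hΩ.mem_nhds hz)
    have hconst : (fun y => ⟪r y, r y⟫) =ᶠ[nhds z] (fun _ => ρ ^ 2) := by
      filter_upwards [hΩ.mem_nhds hz] with y hy using hquad y hy
    have hDzero : fderiv ℝ (fun y => ⟪r y, r y⟫) z = 0 := by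
      rw [hconst.fderiv_eq]
      exact fderiv_const_apply _
    have horth : ∀ u, ⟪r z, (fderiv ℝ r z) u⟫ = 0 := by
      intro u
      have h1 := fderiv_inner_apply ℝ hdAt hdAt u
      rw [hDzero] at h1
      simp only [ContinuousLinearMap.zero_apply] at h1
      have h2 : ⟪r z, (fderiv ℝ r z) u⟫ = ⟪(fderiv ℝ r z) u, r z⟫ := real_inner_comm _ _
      linarith [h1, h2.symm]
    by_contra hne
    have hbij := det_ne_zero_bijective'
      ((fderiv ℝ r z : Euc N →L[ℝ] Euc N) : Euc N →ₗ[ℝ] Euc N) hne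
    obtain ⟨u, hu⟩ := hbij.surjective (r z)
    have h3 := horth u
    have h4 : (fderiv ℝ r z) u = r z := hu
    rw [h4, real_inner_self_eq_norm_sq, hrnorm z hz] at h3
    nlinarith [hρpos]
  exact ⟨r, hrs, hrnorm, hsphere, hdet0⟩
lemma det_ne_zero_bijective'' {E : Type*} [NormedAddCommGroup E] [NormedSpace ℝ E]
    [FiniteDimensional ℝ E] (f : E →ₗ[ℝ] E) (hf : LinearMap.det f ≠ 0) :
    Function.Bijective f := by
  classical
  let b := Module.finBasis ℝ E
  have hm : (LinearMap.toMatrix b b f).det ≠ 0 := by rwa [LinearMap.det_toMatrix]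
  have hu : IsUnit (LinearMap.toMatrix b b f) :=
    (Matrix.isUnit_iff_isUnit_det _).2 (isUnit_iff_ne_zero.2 hm)
  have h2 : IsUnit f := by
    have h3 := hu.map (LinearMap.toMatrixAlgEquiv b).symm
    have h4 : (LinearMap.toMatrixAlgEquiv b).symm (LinearMap.toMatrix b b f) = f := by
      have h5 : LinearMap.toMatrixAlgEquiv b f = LinearMap.toMatrix b b f := rfl
      rw [← h5, AlgEquiv.symm_apply_apply]
    rwa [h4] at h3
  exact (Module.End.isUnit_iff f).mp h2

set_option maxHeartbeats 1000000 in
lemma no_retraction {N : ℕ} (hN : N ≠ 0) {ρ : ℝ} (hρpos : 0 < ρ)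
    {Ω : Set (Euc N)} (hΩ : IsOpen Ω) (hball : closedBall (0 : Euc N) ρ ⊆ Ω)
    {r : Euc N → Euc N} (hrs : ContDiffOn ℝ ⊤ r Ω) (hrnorm : ∀ z ∈ Ω, ‖r z‖ = ρ)
    (hsphere : ∀ z ∈ Ω, ‖z‖ = ρ → r z = z)
    (hdet0 : ∀ z ∈ Ω, (fderiv ℝ r z).det = 0) : False := by
  classical
  set B : Set (Euc N) := closedBall (0 : Euc N) ρ with hBdef
  have hBc : IsCompact B := isCompact_closedBall _ _
  have hBmeas : MeasurableSet B := measurableSet_closedBall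
  have hBconv : Convex ℝ B := convex_closedBall _ _
  -- derivative of r
  have hrdiff : DifferentiableOn ℝ r Ω := hrs.differentiableOn (by simp)
  have hrAt : ∀ z ∈ Ω, DifferentiableAt ℝ r z :=
    fun z hz => hrdiff.differentiableAt (hΩ.mem_nhds hz)
  set Dr : Euc N → Euc N →L[ℝ] Euc N := fun z => fderiv ℝ r z with hDrdef
  set A : Euc N → Euc N →L[ℝ] Euc N :=
    fun z => Dr z - ContinuousLinearMap.id ℝ (Euc N) with hAdef
  have hDrc : ContinuousOn Dr Ω := hrs.continuousOn_fderiv_of_isOpen hΩ le_top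
  have hAc : ContinuousOn A Ω := hDrc.sub continuousOn_const
  -- the homotopy
  set w : Euc N → Euc N := fun z => r z - z with hwdef
  set Fm : ℝ → Euc N → Euc N := fun s z => z + s • w z with hFmdef
  have hFder : ∀ (s : ℝ), ∀ z ∈ Ω,
      HasFDerivAt (Fm s) (ContinuousLinearMap.id ℝ (Euc N) + s • A z) z := by
    intro s z hz
    have h1 : HasFDerivAt w (A z) z := ((hrAt z hz).hasFDerivAt).sub (hasFDerivAt_id z)
    exact (hasFDerivAt_id z).add (h1.const_smul s)
  have hwAt : ∀ z ∈ Ω, HasFDerivAt w (A z) z :=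
    fun z hz => ((hrAt z hz).hasFDerivAt).sub (hasFDerivAt_id z)
  have hwdiff : ∀ z ∈ B, DifferentiableAt ℝ w z :=
    fun z hz => (hwAt z (hball hz)).differentiableAt
  have hwfderiv : ∀ z ∈ Ω, fderiv ℝ w z = A z := fun z hz => (hwAt z hz).fderiv
  -- Lipschitz bound for w on B
  obtain ⟨C₀, hC₀⟩ := hBc.exists_bound_of_continuousOn ((hAc.mono hball))
  set C : ℝ := max C₀ 0 with hCdef
  have hCnonneg : 0 ≤ C := le_max_right _ _
  have hCb : ∀ z ∈ B, ‖fderiv ℝ w z‖ ≤ C := by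
    intro z hz
    rw [hwfderiv z (hball hz)]
    exact le_trans (hC₀ z hz) (le_max_left _ _)
  have hLip : ∀ z₁ ∈ B, ∀ z₂ ∈ B, ‖w z₁ - w z₂‖ ≤ C * ‖z₁ - z₂‖ := by
    intro z₁ hz₁ z₂ hz₂
    exact hBconv.norm_image_sub_le_of_norm_fderiv_le hwdiff hCb hz₂ hz₁
  -- uniform positivity of determinants for small s
  set G : ℝ × Euc N → ℝ :=
    fun p => (ContinuousLinearMap.id ℝ (Euc N) + p.1 • A p.2).det with hGdef
  have hGc : ContinuousOn G (univ ×ˢ Ω) := by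
    apply ContinuousLinearMap.continuous_det.comp_continuousOn
    exact continuousOn_const.add
      ((continuous_fst.continuousOn).smul (hAc.comp continuous_snd.continuousOn
        (fun p hp => hp.2)))
  have hopen : IsOpen ((univ ×ˢ Ω) ∩ G ⁻¹' Ioi (1/2 : ℝ)) :=
    hGc.isOpen_inter_preimage (isOpen_univ.prod hΩ) isOpen_Ioi
  have hsub0 : ({(0:ℝ)} ×ˢ B) ⊆ (univ ×ˢ Ω) ∩ G ⁻¹' Ioi (1/2 : ℝ) := by
    rintro ⟨s, z⟩ ⟨hs, hz⟩
    simp only [Set.mem_singleton_iff] at hs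
    subst hs
    refine ⟨⟨trivial, hball hz⟩, ?_⟩
    have h1 : G (0, z) = 1 := by
      show (ContinuousLinearMap.id ℝ (Euc N) + (0:ℝ) • A z).det = 1
      have h0 : ContinuousLinearMap.id ℝ (Euc N) + (0:ℝ) • A z
          = ContinuousLinearMap.id ℝ (Euc N) := by
        ext u
        simp
      rw [h0]
      show LinearMap.det _ = 1
      rw [ContinuousLinearMap.coe_id, LinearMap.det_id]
    simp only [Set.mem_preimage, h1, Set.mem_Ioi]
    norm_num
  obtain ⟨δ, hδpos, hδ⟩ :=
    (isCompact_singleton.prod hBc).exists_thickening_subset_open hopen hsub0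
  set σ : ℝ := min (δ/2) (min (1/2) (1/(2*(C+1)))) with hσdef
  have hσpos : 0 < σ := by
    apply lt_min (by linarith)
    exact lt_min (by norm_num) (by positivity)
  have hσhalf : σ ≤ 1/2 := le_trans (min_le_right _ _) (min_le_left _ _)
  have hσlt1 : σ < 1 := lt_of_le_of_lt hσhalf (by norm_num)
  have hσC : σ * C < 1 := by
    have h1 : σ ≤ 1/(2*(C+1)) := le_trans (min_le_right _ _) (min_le_right _ _)
    have h2 : 0 < 2*(C+1) := by linarith
    have h3 : σ * C ≤ (1/(2*(C+1))) * C := mul_le_mul_of_nonneg_right h1 hCnonneg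
    have h4 : (1/(2*(C+1))) * C < 1 := by
      rw [div_mul_eq_mul_div, div_lt_one h2]
      linarith
    linarith
  have hdetpos : ∀ s ∈ Icc (0:ℝ) σ, ∀ z ∈ B,
      (0:ℝ) < (ContinuousLinearMap.id ℝ (Euc N) + s • A z).det := by
    intro s hs z hz
    have hmem : (s, z) ∈ Metric.thickening δ ({(0:ℝ)} ×ˢ B) := by
      rw [Metric.mem_thickening_iff]
      refine ⟨((0:ℝ), z), ⟨rfl, hz⟩, ?_⟩
      rw [Prod.dist_eq]
      simp only [dist_self]
      have h1 : dist s (0:ℝ) = |s| := by rw [Real.dist_eq, sub_zero]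
      rw [h1, abs_of_nonneg hs.1, max_eq_left hs.1]
      have h2 : s ≤ δ/2 := le_trans hs.2 (min_le_left _ _)
      linarith
    have := hδ hmem
    have h2 : G (s, z) ∈ Ioi (1/2 : ℝ) := this.2
    have h3 : (1/2 : ℝ) < G (s, z) := h2
    linarith
  -- injectivity of Fm s on B
  have hFinj : ∀ s ∈ Icc (0:ℝ) σ, Set.InjOn (Fm s) B := by
    intro s hs z₁ hz₁ z₂ hz₂ heq
    by_contra hne
    have h1 : z₁ - z₂ = s • (w z₂ - w z₁) := by
      have heq' : z₁ + s • w z₁ = z₂ + s • w z₂ := heq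
      have h2 : z₁ + s • w z₁ - (z₂ + s • w z₂) = 0 := sub_eq_zero_of_eq heq'
      have h3 : z₁ - z₂ - s • (w z₂ - w z₁) = z₁ + s • w z₁ - (z₂ + s • w z₂) := by
        rw [smul_sub]; abel
      exact sub_eq_zero.mp (h3.trans h2)
    have h3 : ‖z₁ - z₂‖ ≤ s * (C * ‖z₂ - z₁‖) := by
      calc ‖z₁ - z₂‖ = ‖s • (w z₂ - w z₁)‖ := by rw [h1]
        _ = |s| * ‖w z₂ - w z₁‖ := by rw [norm_smul, Real.norm_eq_abs]
        _ = s * ‖w z₂ - w z₁‖ := by rw [abs_of_nonneg hs.1]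
        _ ≤ s * (C * ‖z₂ - z₁‖) :=
            mul_le_mul_of_nonneg_left (hLip z₂ hz₂ z₁ hz₁) hs.1
    have h4 : ‖z₂ - z₁‖ = ‖z₁ - z₂‖ := norm_sub_rev _ _
    have h5 : 0 < ‖z₁ - z₂‖ := norm_pos_iff.mpr (sub_ne_zero_of_ne hne)
    have h6 : s * C < 1 := by
      have : s * C ≤ σ * C := mul_le_mul_of_nonneg_right hs.2 hCnonneg
      linarith
    rw [h4] at h3
    nlinarith
  -- Fm s maps B to B
  have hFmaps : ∀ s ∈ Icc (0:ℝ) σ, ∀ z ∈ B, Fm s z ∈ B := by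
    intro s hs z hz
    have hzΩ : z ∈ Ω := hball hz
    have h1 : Fm s z = (1 - s) • z + s • r z := by
      simp only [hFmdef, hwdef]
      module
    rw [hBdef, mem_closedBall_zero_iff] at hz ⊢
    rw [h1]
    have hs1 : s ≤ 1 := le_trans hs.2 hσlt1.le
    calc ‖(1 - s) • z + s • r z‖ ≤ ‖(1 - s) • z‖ + ‖s • r z‖ := norm_add_le _ _
      _ = (1 - s) * ‖z‖ + s * ‖r z‖ := by
          rw [norm_smul, norm_smul, Real.norm_eq_abs, Real.norm_eq_abs,
            abs_of_nonneg (by linarith : (0:ℝ) ≤ 1 - s), abs_of_nonneg hs.1]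
      _ ≤ (1 - s) * ρ + s * ρ := by
          have := hrnorm z hzΩ
          rw [this]
          have h2 : (1 - s) * ‖z‖ ≤ (1 - s) * ρ :=
            mul_le_mul_of_nonneg_left hz (by linarith)
          linarith
      _ = ρ := by ring
  -- Fm s is the identity on the sphere
  have hFsphere : ∀ (s : ℝ), ∀ z, ‖z‖ = ρ → Fm s z = z := by
    intro s z hz
    have hzB : z ∈ B := by rw [hBdef, mem_closedBall_zero_iff, hz]
    have h1 : r z = z := hsphere z (hball hzB) hz
    simp only [hFmdef, hwdef, h1, sub_self, smul_zero, add_zero]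
  -- surjectivity
  have hsurj : ∀ s ∈ Icc (0:ℝ) σ, Fm s '' B = B := by
    intro s hs
    set V : Set (Euc N) := Fm s '' B with hVdef
    have hFmc : ContinuousOn (Fm s) B := by
      intro z hz
      exact ((hFder s z (hball hz)).differentiableAt.continuousAt).continuousWithinAt
    have hVcomp : IsCompact V := hBc.image_of_continuousOn hFmc
    have hVB : V ⊆ B := by
      rintro _ ⟨z, hz, rfl⟩
      exact hFmaps s hs z hz
    have hnhds : ∀ v ∈ V, ‖v‖ < ρ → V ∈ nhds v := by
      rintro _ ⟨z, hz, rfl⟩ hvρ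
      have hzρ : ‖z‖ < ρ := by
        rcases lt_or_eq_of_le (mem_closedBall_zero_iff.mp hz) with h | h
        · exact h
        · exfalso
          rw [hFsphere s z h] at hvρ
          rw [h] at hvρ
          exact lt_irrefl _ hvρ
      have hzΩ : z ∈ Ω := hball hz
      set M : Euc N →L[ℝ] Euc N := ContinuousLinearMap.id ℝ (Euc N) + s • A z with hMdef
      have hMdet : (M : Euc N →ₗ[ℝ] Euc N).det ≠ 0 :=
        ne_of_gt (hdetpos s hs z hz)
      have hbij : Function.Bijective (M : Euc N →ₗ[ℝ] Euc N) :=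
        det_ne_zero_bijective'' _ hMdet
      set le : Euc N ≃ₗ[ℝ] Euc N := LinearEquiv.ofBijective (M : Euc N →ₗ[ℝ] Euc N) hbij
        with hledef
      set e : Euc N ≃L[ℝ] Euc N := le.toContinuousLinearEquiv with hedef
      have hFms : ContDiffOn ℝ ⊤ (Fm s) Ω := by
        exact contDiffOn_id.add ((hrs.sub contDiffOn_id).const_smul s)
      have hstrict : HasStrictFDerivAt (Fm s) (fderiv ℝ (Fm s) z) z :=
        (hFms.contDiffAt (hΩ.mem_nhds hzΩ)).hasStrictFDerivAt (by simp)
      have hfd : fderiv ℝ (Fm s) z = M := (hFder s z hzΩ).fderiv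
      have hecoe : (e : Euc N →L[ℝ] Euc N) = M := by
        have h1 : ((e : Euc N →L[ℝ] Euc N) : Euc N → Euc N) = le :=
          LinearEquiv.coe_toContinuousLinearEquiv' le
        ext u
        have h2 : (e : Euc N →L[ℝ] Euc N) u = le u := congrFun h1 u
        rw [h2]
        rfl
      have hstrict' : HasStrictFDerivAt (Fm s) (e : Euc N →L[ℝ] Euc N) z := by
        rw [hecoe, ← hfd]
        exact hstrict
      have hmap := hstrict'.map_nhds_eq_of_equiv
      rw [← hmap]
      rw [Filter.mem_map]
      apply Filter.mem_of_superset (closedBall_mem_nhds_of_mem (by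
        rwa [mem_ball_zero_iff]))
      intro z' hz'
      exact ⟨z', hz', rfl⟩
    -- connectedness
    have hballsub : ball (0 : Euc N) ρ ⊆ V := by
      by_contra hnot
      rw [Set.not_subset] at hnot
      obtain ⟨x, hxball, hxV⟩ := hnot
      have hcover : ball (0 : Euc N) ρ ⊆ interior V ∪ Vᶜ := by
        intro p hp
        by_cases hpV : p ∈ V
        · left
          rw [mem_interior_iff_mem_nhds]
          exact hnhds p hpV (mem_ball_zero_iff.mp hp)
        · right; exact hpV
      have h0B : (0 : Euc N) ∈ B := by
        rw [hBdef, mem_closedBall_zero_iff, norm_zero]; exact hρpos.le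
      have hF0V : Fm s 0 ∈ V := ⟨0, h0B, rfl⟩
      have hF0n : ‖Fm s 0‖ < ρ := by
        have h1 : Fm s 0 = (1 - s) • (0 : Euc N) + s • r 0 := by
          simp only [hFmdef, hwdef]; module
        rw [h1, smul_zero, zero_add, norm_smul, Real.norm_eq_abs, abs_of_nonneg hs.1,
          hrnorm 0 (hball h0B)]
        have hs1 : s < 1 := lt_of_le_of_lt hs.2 hσlt1
        rcases eq_or_lt_of_le hs.1 with h | h
        · rw [← h]; simpa using hρpos
        · calc s * ρ < 1 * ρ := mul_lt_mul_of_pos_right hs1 hρpos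
            _ = ρ := one_mul ρ
      have hne1 : (ball (0 : Euc N) ρ ∩ interior V).Nonempty :=
        ⟨Fm s 0, mem_ball_zero_iff.mpr hF0n,
          mem_interior_iff_mem_nhds.mpr (hnhds _ hF0V hF0n)⟩
      have hne2 : (ball (0 : Euc N) ρ ∩ Vᶜ).Nonempty := ⟨x, hxball, hxV⟩
      obtain ⟨p, _, hpi, hpc⟩ := (convex_ball (0 : Euc N) ρ).isPreconnected _ _
        isOpen_interior hVcomp.isClosed.isOpen_compl hcover hne1 hne2
      exact hpc (interior_subset hpi)
    have hBV : B ⊆ V := by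
      have h1 : B = closure (ball (0 : Euc N) ρ) := by
        rw [closure_ball 0 (ne_of_gt hρpos)]
      rw [h1]
      calc closure (ball (0 : Euc N) ρ) ⊆ closure V := closure_mono hballsub
        _ = V := hVcomp.isClosed.closure_eq
    exact le_antisymm hVB hBV
  -- the determinant integrand
  set detf : ℝ → Euc N → ℝ :=
    fun s z => (ContinuousLinearMap.id ℝ (Euc N) + s • A z).det with hdetfdef
  have hdetf_cont : ∀ s : ℝ, ContinuousOn (detf s) Ω := by
    intro s
    apply ContinuousLinearMap.continuous_det.comp_continuousOn
    exact continuousOn_const.add (hAc.const_smul s)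
  have hInt : ∀ s : ℝ, IntegrableOn (detf s) B := by
    intro s
    exact ((hdetf_cont s).mono hball).integrableOn_compact hBc
  set volR : ℝ := (volume B).toReal with hvolRdef
  have hvolpos : 0 < volR := by
    apply ENNReal.toReal_pos
    · exact (Metric.measure_closedBall_pos volume 0 hρpos).ne'
    · exact hBc.measure_lt_top.ne
  have hdetfG : ∀ s z, detf s z = G (s, z) := fun s z => rfl
  -- change of variables: the integral of the determinant is the volume
  have hI : ∀ s ∈ Icc (0:ℝ) σ, ∫ z in B, detf s z = volR := by
    intro s hs
    have h1 : ∀ z ∈ B, HasFDerivWithinAt (Fm s)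
        (ContinuousLinearMap.id ℝ (Euc N) + s • A z) B z :=
      fun z hz => (hFder s z (hball hz)).hasFDerivWithinAt
    have h2 := lintegral_abs_det_fderiv_eq_addHaar_image volume hBmeas h1 (hFinj s hs)
    rw [hsurj s hs] at h2
    have h3 : ∫⁻ z in B, ENNReal.ofReal (detf s z) ∂volume
        = ∫⁻ z in B, ENNReal.ofReal
            |(ContinuousLinearMap.id ℝ (Euc N) + s • A z).det| ∂volume := by
      apply setLIntegral_congr_fun hBmeas
      intro z hz
      beta_reduce
      rw [abs_of_pos (hdetpos s hs z hz)]
    have h4 : ∫ z in B, detf s z ∂volume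
        = (∫⁻ z in B, ENNReal.ofReal (detf s z) ∂volume).toReal := by
      apply integral_eq_lintegral_of_nonneg_ae
      · filter_upwards [ae_restrict_mem hBmeas] with z hz
        exact (hdetpos s hs z hz).le
      · exact (((hdetf_cont s).mono hball).aestronglyMeasurable hBmeas)
    rw [h4, h3, h2]
  -- the integrand vanishes identically at s = 1
  have hI1 : ∫ z in B, detf 1 z = 0 := by
    have h1 : ∀ z ∈ B, detf 1 z = 0 := by
      intro z hz
      have hzΩ : z ∈ Ω := hball hz
      have h2 : ContinuousLinearMap.id ℝ (Euc N) + (1:ℝ) • A z = Dr z := by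
        rw [one_smul, hAdef]
        simp only
        abel
      show (ContinuousLinearMap.id ℝ (Euc N) + (1:ℝ) • A z).det = 0
      rw [h2]
      exact hdet0 z hzΩ
    rw [setIntegral_congr_fun hBmeas h1]
    simp
  -- matrices and the polynomial expression of the determinant
  haveI : FiniteDimensional ℝ (Euc N) := inferInstance
  set n : ℕ := Module.finrank ℝ (Euc N) with hndef
  have hnN : n = N := finrank_euclideanSpace_fin
  have hnpos : 0 < n := by rw [hnN]; exact Nat.pos_of_ne_zero hN
  set bas : Module.Basis (Fin n) ℝ (Euc N) := Module.finBasis ℝ (Euc N) with hbasdef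
  set AM : Euc N → Matrix (Fin n) (Fin n) ℝ :=
    fun z => LinearMap.toMatrix bas bas (A z : Euc N →ₗ[ℝ] Euc N) with hAMdef
  have hmat : ∀ (s : ℝ) (z : Euc N), detf s z = Matrix.det (1 + s • AM z) := by
    intro s z
    have h1 : ((ContinuousLinearMap.id ℝ (Euc N) + s • A z : Euc N →L[ℝ] Euc N) :
        Euc N →ₗ[ℝ] Euc N) = LinearMap.id + s • (A z : Euc N →ₗ[ℝ] Euc N) := by
      ext u
      simp
    show LinearMap.det _ = _
    rw [h1, ← LinearMap.det_toMatrix bas, map_add, LinearMap.toMatrix_id,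
      LinearEquiv.map_smul]
  set P : Euc N → Polynomial ℝ := fun z =>
    Matrix.det ((1 : Matrix (Fin n) (Fin n) (Polynomial ℝ)) +
      (Polynomial.X : Polynomial ℝ) • (AM z).map Polynomial.C) with hPdef
  have heval : ∀ (s : ℝ) (z : Euc N), (P z).eval s = detf s z := by
    intro s z
    rw [hmat]
    have h1 : (P z).eval s = (Polynomial.evalRingHom s)
        (Matrix.det ((1 : Matrix (Fin n) (Fin n) (Polynomial ℝ)) +
          (Polynomial.X : Polynomial ℝ) • (AM z).map Polynomial.C)) := rfl
    rw [h1, RingHom.map_det]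
    congr 1
    ext i j
    simp only [RingHom.mapMatrix_apply, Matrix.map_apply, Matrix.add_apply,
      Matrix.smul_apply, Matrix.one_apply, smul_eq_mul, coe_evalRingHom, eval_add,
      eval_mul, eval_X, eval_C, apply_ite (eval s), eval_one, eval_zero]
  have hdeg : ∀ z : Euc N, (P z).degree < ((n + 1 : ℕ) : WithBot ℕ) := by
    intro z
    by_cases hp0 : P z = 0
    case pos =>
      rw [hp0, Polynomial.degree_zero]
      exact_mod_cast WithBot.bot_lt_coe (n+1)
    have hnat : (P z).natDegree ≤ n := by
      rw [hPdef]
      simp only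
      rw [Matrix.det_apply']
      apply Polynomial.natDegree_sum_le_of_forall_le
      intro σp _
      apply le_trans (Polynomial.natDegree_mul_le)
      have hc : (((Equiv.Perm.sign σp : ℤ) : Polynomial ℝ)).natDegree = 0 :=
        Polynomial.natDegree_intCast _
      rw [hc, zero_add]
      apply le_trans (Polynomial.natDegree_prod_le _ _)
      have hterm : ∀ i : Fin n,
          (((1 : Matrix (Fin n) (Fin n) (Polynomial ℝ)) +
            (Polynomial.X : Polynomial ℝ) • (AM z).map Polynomial.C) (σp i) i).natDegree
            ≤ 1 := by
        intro i
        have h1 : ((1 : Matrix (Fin n) (Fin n) (Polynomial ℝ)) +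
            (Polynomial.X : Polynomial ℝ) • (AM z).map Polynomial.C) (σp i) i
            = (1 : Matrix (Fin n) (Fin n) (Polynomial ℝ)) (σp i) i +
              Polynomial.X * Polynomial.C (AM z (σp i) i) := by
          simp [Matrix.add_apply, Matrix.smul_apply, Matrix.map_apply, smul_eq_mul]
        rw [h1]
        apply le_trans (Polynomial.natDegree_add_le _ _)
        apply max_le
        · rw [Matrix.one_apply]
          split_ifs
          · simp
          · simp
        · apply le_trans (Polynomial.natDegree_mul_le)
          simp
      calc ∑ i : Fin n, (((1 : Matrix (Fin n) (Fin n) (Polynomial ℝ)) +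
            (Polynomial.X : Polynomial ℝ) • (AM z).map Polynomial.C) (σp i) i).natDegree
          ≤ ∑ _i : Fin n, 1 := Finset.sum_le_sum fun i _ => hterm i
        _ = n := by simp
    exact (Polynomial.natDegree_lt_iff_degree_lt hp0).mp (Nat.lt_succ_of_le hnat)
  -- Lagrange interpolation nodes
  set vv : ℕ → ℝ := fun i => σ * i / n with hvvdef
  have hvmem : ∀ i ∈ Finset.range (n + 1), vv i ∈ Icc (0:ℝ) σ := by
    intro i hi
    rw [Finset.mem_range] at hi
    have hile : (i : ℝ) ≤ n := by exact_mod_cast Nat.lt_succ_iff.mp hi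
    constructor
    · rw [hvvdef]
      positivity
    · rw [hvvdef]
      simp only
      rw [div_le_iff₀ (by exact_mod_cast hnpos)]
      have h2 : σ * (i:ℝ) ≤ σ * n := mul_le_mul_of_nonneg_left hile hσpos.le
      linarith
  have hvinj : Set.InjOn vv (Finset.range (n + 1) : Finset ℕ) := by
    intro i _ j _ hij
    simp only [hvvdef] at hij
    have hn0 : (n : ℝ) ≠ 0 := by exact_mod_cast hnpos.ne'
    have hσ0 : σ ≠ 0 := hσpos.ne'
    field_simp at hij
    norm_cast at hij
  set c : ℕ → ℝ := fun i => (Lagrange.basis (Finset.range (n + 1)) vv i).eval 1 with hcdef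
  have hkey : ∀ p : Polynomial ℝ, p.degree < ((n + 1 : ℕ) : WithBot ℕ) →
      p.eval 1 = ∑ i ∈ Finset.range (n + 1), p.eval (vv i) * c i := by
    intro p hp
    have hcard : p.degree < ((Finset.range (n + 1)).card : WithBot ℕ) := by
      rwa [Finset.card_range]
    have h1 := Lagrange.eq_interpolate hvinj hcard
    conv_lhs => rw [h1]
    rw [Lagrange.interpolate_apply, Polynomial.eval_finset_sum]
    apply Finset.sum_congr rfl
    intro i _
    rw [Polynomial.eval_mul, Polynomial.eval_C]
  have hc1 : ∑ i ∈ Finset.range (n + 1), c i = 1 := by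
    have h1 := hkey 1 (by
      rw [Polynomial.degree_one]
      exact_mod_cast WithBot.coe_lt_coe.mpr (Nat.succ_pos n))
    simpa using h1.symm
  have hptwise : ∀ z : Euc N, detf 1 z = ∑ i ∈ Finset.range (n + 1),
      detf (vv i) z * c i := by
    intro z
    have h1 := hkey (P z) (hdeg z)
    simp only [heval] at h1
    exact h1
  -- put everything together
  have hfinal : (0:ℝ) = volR := by
    have h1 : ∫ z in B, detf 1 z = ∫ z in B, (∑ i ∈ Finset.range (n + 1),
        detf (vv i) z * c i) := by
      apply setIntegral_congr_fun hBmeas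
      intro z _
      exact hptwise z
    have h2 : ∫ z in B, (∑ i ∈ Finset.range (n + 1), detf (vv i) z * c i) ∂volume
        = ∑ i ∈ Finset.range (n + 1), ∫ z in B, detf (vv i) z * c i ∂volume := by
      apply integral_finset_sum
      intro i _
      exact (hInt (vv i)).mul_const (c i)
    have h3 : ∀ i ∈ Finset.range (n + 1),
        ∫ z in B, detf (vv i) z * c i ∂volume = volR * c i := by
      intro i hi
      rw [integral_mul_const, hI (vv i) (hvmem i hi)]
    rw [← hI1, h1, h2]
    rw [Finset.sum_congr rfl h3, ← Finset.mul_sum, hc1, mul_one]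
  linarith
/-- Brouwer-type fixed point theorem: a continuous self-map of the closed unit ball
mapping into the open ball has a fixed point. -/
lemma brouwer_unit {N : ℕ} (h : Euc N → Euc N)
    (hc : ContinuousOn h (closedBall (0 : Euc N) 1))
    (hb : ∀ z ∈ closedBall (0 : Euc N) 1, ‖h z‖ < 1) :
    ∃ z ∈ closedBall (0 : Euc N) 1, h z = z := by
  by_cases hN : N = 0
  · subst hN
    haveI : Subsingleton (Euc 0) :=
      ⟨fun a b => (WithLp.equiv 2 (Fin 0 → ℝ)).injective (Subsingleton.elim _ _)⟩
    exact ⟨0, mem_closedBall_self zero_le_one, Subsingleton.elim _ _⟩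
  by_contra hfix
  push_neg at hfix
  set B₁ : Set (Euc N) := closedBall (0 : Euc N) 1 with hB₁def
  have hB₁c : IsCompact B₁ := isCompact_closedBall _ _
  have hB₁ne : B₁.Nonempty := ⟨0, mem_closedBall_self zero_le_one⟩
  obtain ⟨z₀, hz₀B, hz₀min⟩ := hB₁c.exists_isMinOn hB₁ne ((hc.sub continuousOn_id).norm)
  set ε : ℝ := ‖h z₀ - z₀‖ with hεdef
  have hεpos : 0 < ε := norm_pos_iff.mpr (sub_ne_zero_of_ne (hfix z₀ hz₀B))
  have hεle : ∀ z ∈ B₁, ε ≤ ‖h z - z‖ := fun z hz => isMinOn_iff.mp hz₀min z hz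
  obtain ⟨z₁, hz₁B, hz₁max⟩ := hB₁c.exists_isMaxOn hB₁ne hc.norm
  set δ : ℝ := 1 - ‖h z₁‖ with hδdef
  have hδpos : 0 < δ := by
    have := hb z₁ hz₁B
    rw [hδdef]
    linarith
  have hble : ∀ z ∈ B₁, ‖h z‖ ≤ 1 - δ := by
    intro z hz
    have h1 := isMaxOn_iff.mp hz₁max z hz
    rw [hδdef]
    linarith
  -- radial projection onto the unit ball
  set pr : Euc N → Euc N := fun z => (max 1 ‖z‖)⁻¹ • z with hprdef
  have hmaxpos : ∀ z : Euc N, 0 < max 1 ‖z‖ :=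
    fun z => lt_of_lt_of_le one_pos (le_max_left _ _)
  have hprcont : Continuous pr := by
    apply Continuous.fun_smul
    · exact (continuous_const.max continuous_norm).inv₀ fun z => (hmaxpos z).ne'
    · exact continuous_id
  have hprnorm : ∀ z, ‖pr z‖ ≤ 1 := by
    intro z
    show ‖(max 1 ‖z‖)⁻¹ • z‖ ≤ 1
    rw [norm_smul, Real.norm_eq_abs, abs_inv, abs_of_pos (hmaxpos z)]
    have h1 : ‖z‖ ≤ max 1 ‖z‖ := le_max_right _ _
    have h2 := hmaxpos z
    calc (max 1 ‖z‖)⁻¹ * ‖z‖ ≤ (max 1 ‖z‖)⁻¹ * max 1 ‖z‖ :=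
          mul_le_mul_of_nonneg_left h1 (inv_nonneg.mpr h2.le)
      _ = 1 := inv_mul_cancel₀ h2.ne'
  have hprmem : ∀ z, pr z ∈ B₁ := fun z => mem_closedBall_zero_iff.mpr (hprnorm z)
  have hprid : ∀ z ∈ B₁, pr z = z := by
    intro z hz
    rw [hB₁def, mem_closedBall_zero_iff] at hz
    show (max 1 ‖z‖)⁻¹ • z = z
    rw [max_eq_left hz, inv_one, one_smul]
  have hprdiff : ∀ z : Euc N, 1 ≤ ‖z‖ → ‖pr z - z‖ = ‖z‖ - 1 := by
    intro z hz1
    have hzpos : (0:ℝ) < ‖z‖ := lt_of_lt_of_le one_pos hz1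
    show ‖(max 1 ‖z‖)⁻¹ • z - z‖ = ‖z‖ - 1
    rw [max_eq_right hz1]
    have h1 : ‖z‖⁻¹ • z - z = (‖z‖⁻¹ - 1) • z := by rw [sub_smul, one_smul]
    rw [h1, norm_smul, Real.norm_eq_abs]
    have h4 : ‖z‖⁻¹ * ‖z‖ = 1 := inv_mul_cancel₀ hzpos.ne'
    have h5 : ‖z‖⁻¹ ≤ 1 := by nlinarith
    rw [abs_of_nonpos (by linarith)]
    nlinarith
  -- extension of h
  set hext : Euc N → Euc N := fun z => h (pr z) with hextdef
  have hextc : Continuous hext := hc.comp_continuous hprcont hprmem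
  have hextb : ∀ z, ‖hext z‖ ≤ 1 - δ := fun z => hble _ (hprmem z)
  set ρ : ℝ := 1 + min (ε/2) 1 with hρdef
  have hρgt1 : 1 < ρ := by
    rw [hρdef]
    have : 0 < min (ε/2) 1 := lt_min (by linarith) one_pos
    linarith
  have hρpos : 0 < ρ := by linarith
  have hextd : ∀ z : Euc N, ‖z‖ ≤ ρ → ε/2 ≤ ‖hext z - z‖ := by
    intro z hz
    by_cases h1 : ‖z‖ ≤ 1
    · have hzB : z ∈ B₁ := mem_closedBall_zero_iff.mpr h1
      have h2 : hext z = h z := by rw [hextdef]; simp only; rw [hprid z hzB]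
      rw [h2]
      have := hεle z hzB
      linarith
    · push_neg at h1
      have h2 := hεle (pr z) (hprmem z)
      have h3 : ‖pr z - z‖ = ‖z‖ - 1 := hprdiff z h1.le
      have h4 : ‖h (pr z) - pr z‖ ≤ ‖h (pr z) - z‖ + ‖z - pr z‖ := by
        have := dist_triangle (h (pr z)) z (pr z)
        simpa [dist_eq_norm] using this
      have h5 : ‖z - pr z‖ = ‖pr z - z‖ := norm_sub_rev _ _
      have h6 : ‖z‖ - 1 ≤ min (ε/2) 1 := by
        rw [hρdef] at hz
        linarith
      have h7 : min (ε/2) 1 ≤ ε/2 := min_le_left _ _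
      have h8 : hext z = h (pr z) := rfl
      rw [h8]
      linarith
  -- smooth approximation
  set η : ℝ := min (ε/4) (δ/2) with hηdef
  have hηpos : 0 < η := lt_min (by linarith) (by linarith)
  obtain ⟨q, hqs, hqa⟩ := exists_smooth_approx (closedBall 0 ρ) (isCompact_closedBall _ _)
    hext hextc.continuousOn hηpos
  set Ω : Set (Euc N) := {z | ‖q z‖ < ρ ∧ q z ≠ z} with hΩdef
  have hΩopen : IsOpen Ω := by
    have h1 : IsOpen {z : Euc N | ‖q z‖ < ρ} :=
      isOpen_lt (hqs.continuous.norm) continuous_const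
    have h2 : IsOpen {z : Euc N | q z ≠ z} :=
      (isClosed_eq hqs.continuous continuous_id).isOpen_compl
    exact h1.inter h2
  have hballΩ : closedBall (0 : Euc N) ρ ⊆ Ω := by
    intro z hz
    have hzρ : ‖z‖ ≤ ρ := mem_closedBall_zero_iff.mp hz
    have hqz := hqa z hz
    constructor
    · have h1 := hextb z
      have h2 : ‖q z‖ ≤ ‖hext z‖ + ‖q z - hext z‖ := by
        have := norm_add_le (hext z) (q z - hext z)
        simpa using this
      have h3 : η ≤ δ/2 := min_le_right _ _
      have : ‖q z‖ < 1 := by linarith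
      linarith
    · have h1 := hextd z hzρ
      have h2 : ‖hext z - z‖ ≤ ‖hext z - q z‖ + ‖q z - z‖ := by
        have := dist_triangle (hext z) (q z) z
        simpa [dist_eq_norm] using this
      have h3 : ‖hext z - q z‖ = ‖q z - hext z‖ := norm_sub_rev _ _
      have h4 : η ≤ ε/4 := min_le_left _ _
      have h5 : 0 < ‖q z - z‖ := by linarith
      exact sub_ne_zero.mp (norm_pos_iff.mp h5)
  obtain ⟨r, hr1, hr2, hr3, hr4⟩ := exists_retraction hρpos hΩopen hqs
    (fun z hz => hz.1) (fun z hz => hz.2)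
  exact no_retraction hN hρpos hΩopen hballΩ hr1 hr2 hr3 hr4

/-- Brouwer-type fixed point theorem on an arbitrary closed ball. -/
lemma brouwer_ball {N : ℕ} {y : Euc N} {t : ℝ} (ht : 0 < t) {h : Euc N → Euc N}
    (hc : ContinuousOn h (closedBall y t))
    (hb : ∀ z ∈ closedBall y t, ‖h z - y‖ < t) :
    ∃ z ∈ closedBall y t, h z = z := by
  set m : Euc N → Euc N := fun w => y + t • w with hmdef
  have hmcont : Continuous m := continuous_const.add (continuous_const.fun_smul continuous_id)
  have hmmem : ∀ w ∈ closedBall (0 : Euc N) 1, m w ∈ closedBall y t := by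
    intro w hw
    rw [mem_closedBall_zero_iff] at hw
    rw [mem_closedBall, dist_eq_norm]
    have h1 : y + t • w - y = t • w := by abel
    rw [h1, norm_smul, Real.norm_eq_abs, abs_of_pos ht]
    nlinarith
  set h₁ : Euc N → Euc N := fun w => t⁻¹ • (h (m w) - y) with h₁def
  have hc₁ : ContinuousOn h₁ (closedBall (0 : Euc N) 1) :=
    (((hc.comp hmcont.continuousOn hmmem).sub continuousOn_const).const_smul t⁻¹)
  have hb₁ : ∀ w ∈ closedBall (0 : Euc N) 1, ‖h₁ w‖ < 1 := by
    intro w hw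
    show ‖t⁻¹ • (h (m w) - y)‖ < 1
    rw [norm_smul, Real.norm_eq_abs, abs_inv, abs_of_pos ht]
    have h2 := hb (m w) (hmmem w hw)
    have h3 : t⁻¹ * ‖h (m w) - y‖ < t⁻¹ * t :=
      mul_lt_mul_of_pos_left h2 (inv_pos.mpr ht)
    rwa [inv_mul_cancel₀ ht.ne'] at h3
  obtain ⟨w₀, hw₀, hfix⟩ := brouwer_unit h₁ hc₁ hb₁
  refine ⟨m w₀, hmmem w₀ hw₀, ?_⟩
  have h1 : h (m w₀) - y = t • w₀ := by
    have h2 : t • h₁ w₀ = t • w₀ := by rw [hfix]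
    have h3 : t • h₁ w₀ = h (m w₀) - y := by
      show t • (t⁻¹ • (h (m w₀) - y)) = h (m w₀) - y
      rw [smul_inv_smul₀ ht.ne']
    rw [← h3, h2]
  show h (m w₀) = m w₀
  have h5 : y + (h (m w₀) - y) = h (m w₀) := by abel
  calc h (m w₀) = y + (h (m w₀) - y) := h5.symm
    _ = y + t • w₀ := by rw [h1]
    _ = m w₀ := rfl

/-- Let `U ⊆ ℝ^N` be open with closure homeomorphic to the closed unit
disk, and let `φ₀, φ₁` be continuous injective maps (homeomorphisms onto their images)
on an open neighbourhood `W` of `closure U`. If `|φ₀(x) − φ₁(x)| < t` on `closure U`,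
then `(φ₀(U))_t ⊆ φ₁(U)`. -/
theorem stmt15 (N : ℕ) (U : Set (Euc N)) (hUopen : IsOpen U)
    (hdisk : Nonempty (closure U ≃ₜ Metric.closedBall (0 : Euc N) 1))
    (W : Set (Euc N)) (hWopen : IsOpen W) (hUW : closure U ⊆ W)
    (φ₀ φ₁ : Euc N → Euc N)
    (hc₀ : ContinuousOn φ₀ W) (hc₁ : ContinuousOn φ₁ W)
    (hi₀ : Set.InjOn φ₀ W) (hi₁ : Set.InjOn φ₁ W)
    (t : ℝ) (ht : 0 < t) (hclose : ∀ x ∈ closure U, ‖φ₀ x - φ₁ x‖ < t) :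
    shrinkSet (φ₀ '' U) t ⊆ φ₁ '' U := by
  classical
  intro y hy
  obtain ⟨hyV, hyd⟩ := hy
  -- the closure of U is compact since it is homeomorphic to the closed disk
  have hKc : IsCompact (closure U) := by
    obtain ⟨e⟩ := hdisk
    haveI : CompactSpace (Metric.closedBall (0 : Euc N) 1) :=
      isCompact_iff_compactSpace.mp (isCompact_closedBall _ _)
    haveI : CompactSpace (closure U) := e.symm.compactSpace
    exact isCompact_iff_compactSpace.mpr inferInstance
  -- Step 1: the closed ball of radius t around y is contained in φ₀ '' U
  have hstep1 : Metric.closedBall y t ⊆ φ₀ '' U := by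
    intro z hz
    by_contra hzV
    obtain ⟨p, hpf, hpd⟩ := segment_meets_frontier hyV hzV
    have h1 : Metric.infDist y (frontier (φ₀ '' U)) ≤ dist y p :=
      Metric.infDist_le_dist_of_mem hpf
    have h2 : dist y z ≤ t := by
      rw [Metric.mem_closedBall] at hz
      rw [dist_comm]
      exact hz
    linarith
  -- the inverse of φ₀ on the compact set closure U
  have hφ₀K : ContinuousOn φ₀ (closure U) := hc₀.mono hUW
  have hiK : Set.InjOn φ₀ (closure U) := hi₀.mono hUW
  have hbij : Set.BijOn φ₀ (closure U) (φ₀ '' closure U) := hiK.bijOn_image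
  set e : ↥(closure U) ≃ ↥(φ₀ '' closure U) := Set.BijOn.equiv φ₀ hbij with hedef
  haveI : CompactSpace ↥(closure U) := isCompact_iff_compactSpace.mp hKc
  have hcont_e : Continuous e :=
    continuous_induced_rng.mpr (continuousOn_iff_continuous_restrict.mp hφ₀K)
  set homeo : ↥(closure U) ≃ₜ ↥(φ₀ '' closure U) :=
    hcont_e.homeoOfEquivCompactToT2 with hhdef
  have hkg : Continuous fun zz : ↥(φ₀ '' closure U) =>
      φ₁ ((homeo.symm zz : ↥(closure U)) : Euc N) := by
    apply hc₁.comp_continuous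
    · exact continuous_subtype_val.comp homeo.symm.continuous
    · exact fun zz => hUW (homeo.symm zz).2
  set hfun : Euc N → Euc N := fun z =>
    if hz : z ∈ φ₀ '' closure U then
      z - φ₁ ((homeo.symm ⟨z, hz⟩ : ↥(closure U)) : Euc N) + y
    else 0 with hfundef
  have hres : (φ₀ '' closure U).domRestrict hfun = fun zz : ↥(φ₀ '' closure U) =>
      (zz : Euc N) - φ₁ ((homeo.symm zz : ↥(closure U)) : Euc N) + y := by
    funext zz
    have h1 : (zz : Euc N) ∈ φ₀ '' closure U := zz.2
    simp only [Set.domRestrict_apply, hfundef, dif_pos h1, Subtype.coe_eta]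
  have hfc : ContinuousOn hfun (φ₀ '' closure U) := by
    rw [continuousOn_iff_continuous_restrict, hres]
    exact (continuous_subtype_val.sub hkg).add continuous_const
  have hsubset : Metric.closedBall y t ⊆ φ₀ '' closure U :=
    le_trans hstep1 (Set.image_mono subset_closure)
  have hvalue : ∀ x ∈ U, hfun (φ₀ x) = φ₀ x - φ₁ x + y := by
    intro x hxU
    have hxK : x ∈ closure U := subset_closure hxU
    have hmem : φ₀ x ∈ φ₀ '' closure U := ⟨x, hxK, rfl⟩
    have h1 : e ⟨x, hxK⟩ = ⟨φ₀ x, hmem⟩ := by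
      apply Subtype.ext
      rfl
    have h2 : (homeo.symm ⟨φ₀ x, hmem⟩ : ↥(closure U)) = ⟨x, hxK⟩ := by
      have h3 : (homeo.symm ⟨φ₀ x, hmem⟩ : ↥(closure U)) = e.symm ⟨φ₀ x, hmem⟩ := rfl
      rw [h3]
      exact (Equiv.symm_apply_eq e).mpr h1.symm
    show (if hz : φ₀ x ∈ φ₀ '' closure U then
        φ₀ x - φ₁ ((homeo.symm ⟨φ₀ x, hz⟩ : ↥(closure U)) : Euc N) + y
      else 0) = φ₀ x - φ₁ x + y
    rw [dif_pos hmem, h2]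
  have hfb : ∀ z ∈ Metric.closedBall y t, ‖hfun z - y‖ < t := by
    intro z hz
    obtain ⟨x, hxU, rfl⟩ := hstep1 hz
    rw [hvalue x hxU]
    have h1 : φ₀ x - φ₁ x + y - y = φ₀ x - φ₁ x := by abel
    rw [h1]
    exact hclose x (subset_closure hxU)
  obtain ⟨z₀, hz₀mem, hz₀fix⟩ := brouwer_ball ht (hfc.mono hsubset) hfb
  obtain ⟨x₁, hx₁U, hx₁eq⟩ := hstep1 hz₀mem
  refine ⟨x₁, hx₁U, ?_⟩
  have h2 : φ₀ x₁ - φ₁ x₁ + y = φ₀ x₁ := by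
    rw [← hvalue x₁ hx₁U, hx₁eq]
    exact hz₀fix
  have h4 : φ₁ x₁ - y = 0 := by
    have h5 := congrArg (fun u => φ₀ x₁ - u) h2
    have h6 : φ₀ x₁ - (φ₀ x₁ - φ₁ x₁ + y) = φ₁ x₁ - y := by abel
    rw [h6] at h5
    have h7 : φ₀ x₁ - φ₀ x₁ = (0 : Euc N) := sub_self _
    rw [h7] at h5
    exact h5
  have h8 : φ₁ x₁ = y := by
    have := sub_eq_zero.mp h4
    exact this
  exact h8
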